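/- Let A be a non-Boolean rank-ℓ arrangement of n hyperplanes and suppose the bigraded Hilbert series of S/I(A) has the partial-fraction form h(S/I; t, u) = Σ_{i=1}^{ℓ} t_{i0} / ((1−t)^i (1−u)^{n−i}) + lower-order terms (pole order < n). Then the power series F(s,t) = (1 − t + st(1−t))^n · h(S/I; t, t − st(1−t)) is a polynomial in s and t, and F(s, 1) = (−1)^ℓ χ(A, −s). -/

import Mathlib

/- STATEMENT 14: let A be a non-Boolean rank-ℓ arrangement of n hyperplanes and
suppose the bigraded Hilbert series of S/I(A) has the partial-fraction form
  h(S/I; t,u) = Σ_{i=1}^{ℓ} t_{i0}/((1−t)^i (1−u)^{n−i}) + (pole order < n).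
Then F(s,t) = (1 − t + st(1−t))^n · h(S/I; t, t − st(1−t)) is a polynomial in
s, t and F(s,1) = (−1)^ℓ χ(A, −s).

Formalization: we clear the common denominator (1−t)^n(1−u)^n; the hypothesis
says the numerator N (so h(S/I;t,u) = N/((1−t)^n(1−u)^n)) has the form
  N = Σ_{i=1}^ℓ t_{i0}(1−t)^{n−i}(1−u)^i + Σ_{i+j≤n−1} c_{ij}(1−t)^{n−i}(1−u)^{n−j}.
Under u ↦ t − st(1−t) one has 1−u ↦ (1−t)(1+st), and F = N∘sub/(1−t)^n; the
conclusion is that (1−t)^n divides N∘sub, with quotient F satisfying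
F(s,1) = (−1)^ℓ χ(A,−s).  In the hypothesis `X 0 = t, X 1 = u`; in the
conclusion `X 0 = s, X 1 = t`. -/

open MvPolynomial

variable {V : Type*} [AddCommGroup V] [Module ℂ V] [FiniteDimensional ℂ V]

/-- rank of a set of subspaces: codimension of its intersection. -/
noncomputable def rk (S : Finset (Submodule ℂ V)) : ℕ :=
  Module.finrank ℂ V - Module.finrank ℂ (S.inf id : Submodule ℂ V)

/-- Characteristic polynomial (Whitney rank-sum formula). -/
noncomputable def charPolyA (A : Finset (Submodule ℂ V)) : Polynomial ℤ :=
  ∑ S ∈ A.powerset, (-1 : Polynomial ℤ) ^ S.card * Polynomial.X ^ (rk A - rk S)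

/-- Tutte polynomial of the arrangement, `x = X 0`, `y = X 1`. -/
noncomputable def tutteA (A : Finset (Submodule ℂ V)) : MvPolynomial (Fin 2) ℤ :=
  ∑ S ∈ A.powerset, (X 0 - 1) ^ (rk A - rk S) * (X 1 - 1) ^ (S.card - rk S)

/-- The substitution `t ↦ t`, `u ↦ t − st(1−t)` (input vars `(t,u)`, output
vars `(s,t) = (X 0, X 1)`). -/
noncomputable def sub14 : MvPolynomial (Fin 2) ℚ →ₐ[ℚ] MvPolynomial (Fin 2) ℚ :=
  aeval (fun j : Fin 2 => if j = 0 then X 1 else X 1 - X 0 * X 1 * (1 - X 1))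

/-! ### Auxiliary lemmas -/

lemma neg_one_pow_mod {R : Type*} [Ring R] {m n : ℕ} (h : m % 2 = n % 2) :
    (-1 : R) ^ m = (-1) ^ n := by
  rw [neg_one_pow_eq_pow_mod_two, h, ← neg_one_pow_eq_pow_mod_two]

lemma rk_mono {S T : Finset (Submodule ℂ V)} (h : S ⊆ T) : rk S ≤ rk T :=
  Nat.sub_le_sub_left (Submodule.finrank_mono (Finset.inf_mono h)) _

lemma rk_le_card {A : Finset (Submodule ℂ V)}
    (hA : ∀ H ∈ A, Module.finrank ℂ H + 1 = Module.finrank ℂ V)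
    {S : Finset (Submodule ℂ V)} (hS : S ⊆ A) : rk S ≤ S.card := by
  have key : ∀ S : Finset (Submodule ℂ V), S ⊆ A →
      Module.finrank ℂ V ≤ S.card + Module.finrank ℂ (S.inf id : Submodule ℂ V) := by
    classical
    intro S
    induction S using Finset.induction_on with
    | empty => intro _; rw [Finset.card_empty, zero_add, Finset.inf_empty]; simp
    | @insert a S ha ih =>
      intro hsub
      have hA' := hA a (hsub (Finset.mem_insert_self a S))
      have hsub' : S ⊆ A := fun x hx => hsub (Finset.mem_insert_of_mem hx)
      have h1 := ih hsub'
      have h2 := Submodule.finrank_sup_add_finrank_inf_eq a (S.inf id)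
      have h3 : Module.finrank ℂ ↥(a ⊔ S.inf id) ≤ Module.finrank ℂ V :=
        Submodule.finrank_le _
      rw [Finset.inf_insert, Finset.card_insert_of_notMem ha]
      simp only [id_eq] at *
      omega
  have := key S hS
  unfold rk
  omega

lemma sub14_C (q : ℚ) : sub14 (C q) = C q := by
  simp [sub14, algebraMap_eq]

lemma sub14_one_sub_X0 : sub14 ((1 : MvPolynomial (Fin 2) ℚ) - X 0) = 1 - X 1 := by
  simp [sub14]

lemma sub14_one_sub_X1 :
    sub14 ((1 : MvPolynomial (Fin 2) ℚ) - X 1) = (1 - X 1) * (1 + X 0 * X 1) := by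
  simp only [sub14, map_sub, map_one, aeval_X]
  norm_num
  ring

lemma tutte_const_coeff_zero {A : Finset (Submodule ℂ V)}
    (hA : ∀ H ∈ A, Module.finrank ℂ H + 1 = Module.finrank ℂ V)
    (hne : A.Nonempty) :
    MvPolynomial.coeff 0 (tutteA A) = 0 := by
  have h : MvPolynomial.coeff 0 (tutteA A)
      = ∑ S ∈ A.powerset, (-1 : ℤ) ^ (rk A - rk S) * (-1) ^ (S.card - rk S) := by
    rw [show (MvPolynomial.coeff 0 : MvPolynomial (Fin 2) ℤ → ℤ) = MvPolynomial.constantCoeff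
      from (constantCoeff_eq).symm]
    simp [tutteA, map_sum]
  rw [h]
  have h2 : ∀ S ∈ A.powerset,
      (-1 : ℤ) ^ (rk A - rk S) * (-1) ^ (S.card - rk S) = (-1) ^ (rk A) * (-1) ^ S.card := by
    intro S hS
    rw [Finset.mem_powerset] at hS
    have h3 := rk_mono hS
    have h4 := rk_le_card hA hS
    rw [← pow_add, ← pow_add]
    exact neg_one_pow_mod (by omega)
  rw [Finset.sum_congr rfl h2]
  rw [← Finset.mul_sum, Finset.sum_powerset_neg_one_pow_card_of_nonempty hne, mul_zero]

lemma eval_eq_sum_coeff (P : MvPolynomial (Fin 2) ℚ) (D : ℕ)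
    (hD : degreeOf 0 P ≤ D) (z : ℚ) :
    eval (fun j : Fin 2 => if j = 0 then z else 0) P
      = ∑ i ∈ Finset.range (D + 1), coeff (Finsupp.single 0 i) P * z ^ i := by
  have hstart : eval (fun j : Fin 2 => if j = 0 then z else 0) P
      = ∑ d ∈ P.support, coeff d P * (z ^ d 0 * 0 ^ d 1) := by
    rw [eval_eq']
    refine Finset.sum_congr rfl fun d _ => ?_
    rw [Fin.prod_univ_two]
    norm_num
  rw [hstart]
  rw [← Finset.sum_filter_add_sum_filter_not P.support (fun d => d 1 = 0)]
  have h2 : ∑ d ∈ P.support.filter (fun d => ¬ d 1 = 0),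
      coeff d P * (z ^ d 0 * 0 ^ d 1) = 0 := by
    apply Finset.sum_eq_zero
    intro d hd
    rw [Finset.mem_filter] at hd
    rw [zero_pow hd.2, mul_zero, mul_zero]
  rw [h2, add_zero]
  have h3 : ∑ d ∈ P.support.filter (fun d => d 1 = 0), coeff d P * (z ^ d 0 * 0 ^ d 1)
      = ∑ d ∈ P.support.filter (fun d => d 1 = 0), coeff d P * z ^ d 0 := by
    apply Finset.sum_congr rfl
    intro d hd
    rw [Finset.mem_filter] at hd
    rw [hd.2, pow_zero, mul_one]
  rw [h3]
  have h4 : (∑ i ∈ Finset.range (D + 1), coeff (Finsupp.single 0 i) P * z ^ i)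
      = ∑ d ∈ (Finset.range (D + 1)).image (fun i => Finsupp.single (0 : Fin 2) i),
          coeff d P * z ^ d 0 := by
    rw [Finset.sum_image (fun i _ i' _ h => Finsupp.single_injective 0 h)]
    apply Finset.sum_congr rfl
    intro i _
    simp
  rw [h4]
  apply Finset.sum_subset
  · intro d hd
    rw [Finset.mem_filter] at hd
    rw [Finset.mem_image]
    refine ⟨d 0, ?_, ?_⟩
    · rw [Finset.mem_range]
      have := monomial_le_degreeOf 0 hd.1
      omega
    · ext j
      fin_cases j
      · simp
      · simp [hd.2]
  · intro d hdi hdn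
    have hc : coeff d P = 0 := by
      by_contra hc
      apply hdn
      rw [Finset.mem_filter]
      refine ⟨mem_support_iff.mpr hc, ?_⟩
      rw [Finset.mem_image] at hdi
      obtain ⟨i, _, rfl⟩ := hdi
      simp [Finsupp.single_apply]
    rw [hc, zero_mul]

lemma degreeOf_aux (A : Finset (Submodule ℂ V)) :
    degreeOf 0 (∑ S ∈ A.powerset,
      (X 0 - 1 : MvPolynomial (Fin 2) ℚ) ^ (rk A - rk S) * (X 1 - 1) ^ (S.card - rk S))
      ≤ rk A := by
  refine le_trans (degreeOf_sum_le _ _ _) ?_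
  rw [Finset.sup_le_iff]
  intro S hS
  refine le_trans (degreeOf_mul_le _ _ _) ?_
  have hx0 : degreeOf 0 (X 0 - 1 : MvPolynomial (Fin 2) ℚ) ≤ 1 := by
    rw [sub_eq_add_neg, show (-1 : MvPolynomial (Fin 2) ℚ) = C (-1) by simp]
    refine le_trans (degreeOf_add_le _ _ _) ?_
    rw [degreeOf_C, degreeOf_X]
    simp
  have hx1 : degreeOf 0 (X 1 - 1 : MvPolynomial (Fin 2) ℚ) ≤ 0 := by
    rw [sub_eq_add_neg, show (-1 : MvPolynomial (Fin 2) ℚ) = C (-1) by simp]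
    refine le_trans (degreeOf_add_le _ _ _) ?_
    rw [degreeOf_C, degreeOf_X]
    simp [Fin.ext_iff]
  have h1 : degreeOf 0 ((X 0 - 1 : MvPolynomial (Fin 2) ℚ) ^ (rk A - rk S)) ≤ rk A - rk S := by
    refine le_trans (degreeOf_pow_le _ _ _) ?_
    calc (rk A - rk S) * degreeOf 0 (X 0 - 1 : MvPolynomial (Fin 2) ℚ)
        ≤ (rk A - rk S) * 1 := Nat.mul_le_mul_left _ hx0
      _ = rk A - rk S := mul_one _
  have h2 : degreeOf 0 ((X 1 - 1 : MvPolynomial (Fin 2) ℚ) ^ (S.card - rk S)) = 0 := by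
    have := le_trans (degreeOf_pow_le 0 (X 1 - 1 : MvPolynomial (Fin 2) ℚ) (S.card - rk S))
      (Nat.mul_le_mul_left _ hx1)
    omega
  have := Nat.sub_le (rk A) (rk S)
  omega

theorem specialization_charPoly (A : Finset (Submodule ℂ V))
    (hA : ∀ H ∈ A, Module.finrank ℂ H + 1 = Module.finrank ℂ V)
    (hess : rk A = Module.finrank ℂ V)
    (hnonBoolean : rk A < A.card)
    -- the numerator of h(S/I;t,u) over the denominator (1−t)^n(1−u)^n:
    (N : MvPolynomial (Fin 2) ℚ)
    -- hypothesis: partial fraction form with leading Tutte part and pole order < n tail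
    (c : ℕ × ℕ → MvPolynomial (Fin 2) ℚ)
    (hN : N =
      (∑ i ∈ Finset.Icc 1 (rk A),
        C ((MvPolynomial.coeff (Finsupp.single 0 i) (tutteA A) : ℤ) : ℚ) *
          (1 - X 0) ^ (A.card - i) * (1 - X 1) ^ i) +
      ∑ ij ∈ (Finset.range A.card ×ˢ Finset.range A.card).filter
          (fun ij => ij.1 + ij.2 ≤ A.card - 1),
        c ij * (1 - X 0) ^ (A.card - ij.1) * (1 - X 1) ^ (A.card - ij.2)) :
    -- conclusion: F(s,t) is a polynomial and F(s,1) = (−1)^ℓ χ(A,−s)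
    ∃ F : MvPolynomial (Fin 2) ℚ,
      sub14 N = (1 - X 1) ^ A.card * F ∧
      ∀ s : ℚ,
        MvPolynomial.eval (fun j : Fin 2 => if j = 0 then s else 1) F =
          (-1) ^ (rk A) * Polynomial.aeval (-s) (charPolyA A) := by
  classical
  have hln : rk A < A.card := hnonBoolean
  have hn1 : 1 ≤ A.card := by omega
  refine ⟨(∑ i ∈ Finset.Icc 1 (rk A),
      C ((MvPolynomial.coeff (Finsupp.single 0 i) (tutteA A) : ℤ) : ℚ) * (1 + X 0 * X 1) ^ i) +
    ∑ ij ∈ (Finset.range A.card ×ˢ Finset.range A.card).filter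
        (fun ij => ij.1 + ij.2 ≤ A.card - 1),
      sub14 (c ij) * (1 - X 1) ^ (A.card - ij.1 - ij.2) * (1 + X 0 * X 1) ^ (A.card - ij.2),
    ?_, ?_⟩
  · -- divisibility part
    rw [hN, map_add, map_sum, map_sum, mul_add, Finset.mul_sum, Finset.mul_sum]
    congr 1
    · refine Finset.sum_congr rfl fun i hi => ?_
      rw [Finset.mem_Icc] at hi
      rw [map_mul, map_mul, map_pow, map_pow, sub14_C, sub14_one_sub_X0, sub14_one_sub_X1]
      have key : ((1 : MvPolynomial (Fin 2) ℚ) - X 1) ^ (A.card - i) *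
          ((1 - X 1) * (1 + X 0 * X 1)) ^ i = (1 - X 1) ^ A.card * (1 + X 0 * X 1) ^ i := by
        rw [mul_pow, ← mul_assoc, ← pow_add]
        congr 2
        omega
      rw [mul_assoc, key]
      ring
    · refine Finset.sum_congr rfl fun ij hij => ?_
      simp only [Finset.mem_filter, Finset.mem_product, Finset.mem_range] at hij
      rw [map_mul, map_mul, map_pow, map_pow, sub14_one_sub_X0, sub14_one_sub_X1]
      have key : ((1 : MvPolynomial (Fin 2) ℚ) - X 1) ^ (A.card - ij.1) *
          ((1 - X 1) * (1 + X 0 * X 1)) ^ (A.card - ij.2)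
          = (1 - X 1) ^ A.card *
            ((1 - X 1) ^ (A.card - ij.1 - ij.2) * (1 + X 0 * X 1) ^ (A.card - ij.2)) := by
        rw [mul_pow, ← mul_assoc, ← pow_add, ← mul_assoc, ← pow_add]
        congr 2
        omega
      rw [mul_assoc, key]
      ring
  · -- evaluation part
    intro s
    rw [map_add]
    have h2 : ∑ ij ∈ (Finset.range A.card ×ˢ Finset.range A.card).filter
        (fun ij => ij.1 + ij.2 ≤ A.card - 1),
        eval (fun j : Fin 2 => if j = 0 then s else 1)
          (sub14 (c ij) * (1 - X 1) ^ (A.card - ij.1 - ij.2) *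
            (1 + X 0 * X 1) ^ (A.card - ij.2)) = 0 := by
      apply Finset.sum_eq_zero
      intro ij hij
      simp only [Finset.mem_filter, Finset.mem_product, Finset.mem_range] at hij
      rw [map_mul, map_mul, map_pow]
      have hz : eval (fun j : Fin 2 => if j = 0 then s else 1)
          ((1 : MvPolynomial (Fin 2) ℚ) - X 1) = 0 := by
        simp
      rw [hz, zero_pow (by omega), mul_zero, zero_mul]
    rw [map_sum, map_sum, h2, add_zero]
    have h1 : ∀ i ∈ Finset.Icc 1 (rk A),
        eval (fun j : Fin 2 => if j = 0 then s else 1)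
          (C ((MvPolynomial.coeff (Finsupp.single 0 i) (tutteA A) : ℤ) : ℚ) *
            (1 + X 0 * X 1) ^ i)
          = ((MvPolynomial.coeff (Finsupp.single 0 i) (tutteA A) : ℤ) : ℚ) * (1 + s) ^ i := by
      intro i _
      simp
    rw [Finset.sum_congr rfl h1]
    -- now the combinatorial identity
    have hAne : A.Nonempty := Finset.card_pos.mp (by omega)
    have ht00 : MvPolynomial.coeff 0 (tutteA A) = 0 := tutte_const_coeff_zero hA hAne
    have hrange : Finset.range (rk A + 1) = insert 0 (Finset.Icc 1 (rk A)) := by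
      ext j
      simp only [Finset.mem_range, Finset.mem_insert, Finset.mem_Icc]
      omega
    have hsum1 : ∑ i ∈ Finset.Icc 1 (rk A),
        ((MvPolynomial.coeff (Finsupp.single 0 i) (tutteA A) : ℤ) : ℚ) * (1 + s) ^ i
        = ∑ i ∈ Finset.range (rk A + 1),
        ((MvPolynomial.coeff (Finsupp.single 0 i) (tutteA A) : ℤ) : ℚ) * (1 + s) ^ i := by
      rw [hrange, Finset.sum_insert (by simp)]
      rw [show (Finsupp.single (0 : Fin 2) 0) = 0 from Finsupp.single_zero 0, ht00]
      norm_num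
    rw [hsum1]
    set P : MvPolynomial (Fin 2) ℚ := MvPolynomial.map (Int.castRingHom ℚ) (tutteA A) with hP
    have hPmap : P = ∑ S ∈ A.powerset,
        (X 0 - 1 : MvPolynomial (Fin 2) ℚ) ^ (rk A - rk S) * (X 1 - 1) ^ (S.card - rk S) := by
      rw [hP, tutteA, map_sum]
      refine Finset.sum_congr rfl fun S _ => ?_
      simp
    have hcoeff : ∀ i, coeff (Finsupp.single 0 i) P
        = ((MvPolynomial.coeff (Finsupp.single 0 i) (tutteA A) : ℤ) : ℚ) := by
      intro i
      rw [hP, coeff_map]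
      rfl
    have hdeg : degreeOf 0 P ≤ rk A := by
      rw [hPmap]
      exact degreeOf_aux A
    have hsum2 : ∑ i ∈ Finset.range (rk A + 1),
        ((MvPolynomial.coeff (Finsupp.single 0 i) (tutteA A) : ℤ) : ℚ) * (1 + s) ^ i
        = eval (fun j : Fin 2 => if j = 0 then (1 + s) else 0) P := by
      rw [eval_eq_sum_coeff P (rk A) hdeg (1 + s)]
      exact Finset.sum_congr rfl fun i _ => by rw [hcoeff]
    rw [hsum2, hPmap, map_sum]
    have h3 : ∀ S ∈ A.powerset,
        eval (fun j : Fin 2 => if j = 0 then (1 + s) else 0)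
          ((X 0 - 1 : MvPolynomial (Fin 2) ℚ) ^ (rk A - rk S) * (X 1 - 1) ^ (S.card - rk S))
          = s ^ (rk A - rk S) * (-1 : ℚ) ^ (S.card - rk S) := by
      intro S _
      rw [map_mul, map_pow, map_pow, map_sub, map_sub, eval_X, eval_X, map_one]
      norm_num
    rw [Finset.sum_congr rfl h3]
    have hchar : (Polynomial.aeval (-s) (charPolyA A) : ℚ)
        = ∑ S ∈ A.powerset, (-1 : ℚ) ^ S.card * (-s) ^ (rk A - rk S) := by
      rw [charPolyA, map_sum]
      refine Finset.sum_congr rfl fun S _ => ?_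
      rw [map_mul, map_pow, map_pow, map_neg, map_one, Polynomial.aeval_X]
    rw [hchar, Finset.mul_sum]
    refine Finset.sum_congr rfl fun S hS => ?_
    rw [Finset.mem_powerset] at hS
    have h4 := rk_mono hS
    have h5 := rk_le_card hA hS
    rw [neg_pow (s) (rk A - rk S)]
    have hsign : (-1 : ℚ) ^ (S.card - rk S)
        = (-1) ^ rk A * ((-1) ^ S.card * (-1) ^ (rk A - rk S)) := by
      rw [← pow_add, ← pow_add]
      exact neg_one_pow_mod (by omega)
    rw [hsign]
    ring
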